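/- Let m ≥ 2, 0 ≤ s ≤ m+1, let I, J ⊆ ℝ be open intervals with x + y > 0 for all x ∈ I, y ∈ J, and let z : I → ℝ^{m+1} and w : J → ℝ^{m+1} be three times continuously differentiable curves. Define L(x,y) = (z(x)+w(y))/(x+y) − (z'(x)+w'(y))/2 on I × J and assume: (c.1) ⟨L(x,y), L(x,y)⟩_s = 1 for all (x,y); (c.2) 2⟨z(x)+w(y), z'''(x)⟩_s = (x+y)⟨z'(x)+w'(y), z'''(x)⟩_s for all (x,y); and (c.3) 2⟨z(x)+w(y), w'''(y)⟩_s = (x+y)⟨z'(x)+w'(y), w'''(y)⟩_s for all (x,y). Then on I × J: ⟨∂L/∂x, ∂L/∂x⟩_s = 0, ⟨∂L/∂y, ∂L/∂y⟩_s = 0, ⟨∂L/∂x, ∂L/∂y⟩_s = −2/(x+y)², and ∂²L/∂x∂y = (2/(x+y)²) L. (This is the converse part of case (c) of Theorem 5.1: such an L defines a minimal Lorentz surface of constant curvature one in the pseudo-sphere S^m_s(1).) -/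

import Mathlib

noncomputable def pform (s n : ℕ) (u v : Fin n → ℝ) : ℝ :=
  ∑ i : Fin n, (if (i : ℕ) < s then -(u i * v i) else u i * v i)

noncomputable def pd1 {E : Type*} [NormedAddCommGroup E] [NormedSpace ℝ E]
    (L : ℝ → ℝ → E) (x y : ℝ) : E :=
  deriv (fun t => L t y) x

noncomputable def pd2 {E : Type*} [NormedAddCommGroup E] [NormedSpace ℝ E]
    (L : ℝ → ℝ → E) (x y : ℝ) : E :=
  deriv (fun t => L x t) y

lemma pform_comm (s n : ℕ) (u v : Fin n → ℝ) : pform s n u v = pform s n v u := by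
  unfold pform; apply Finset.sum_congr rfl; intros; split <;> ring

lemma pform_add_left (s n : ℕ) (u v w : Fin n → ℝ) :
    pform s n (u + v) w = pform s n u w + pform s n v w := by
  unfold pform; rw [← Finset.sum_add_distrib]
  apply Finset.sum_congr rfl; intros; simp only [Pi.add_apply]; split <;> ring

lemma pform_smul_left (s n : ℕ) (a : ℝ) (u w : Fin n → ℝ) :
    pform s n (a • u) w = a * pform s n u w := by
  unfold pform; rw [Finset.mul_sum]
  apply Finset.sum_congr rfl; intros; simp only [Pi.smul_apply, smul_eq_mul]; split <;> ring

lemma pform_sub_left (s n : ℕ) (u v w : Fin n → ℝ) :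
    pform s n (u - v) w = pform s n u w - pform s n v w := by
  unfold pform; rw [← Finset.sum_sub_distrib]
  apply Finset.sum_congr rfl; intros; simp only [Pi.sub_apply]; split <;> ring

lemma pform_add_right (s n : ℕ) (u v w : Fin n → ℝ) :
    pform s n w (u + v) = pform s n w u + pform s n w v := by
  rw [pform_comm, pform_add_left, pform_comm s n u, pform_comm s n v]

lemma pform_smul_right (s n : ℕ) (a : ℝ) (u w : Fin n → ℝ) :
    pform s n w (a • u) = a * pform s n w u := by
  rw [pform_comm, pform_smul_left, pform_comm]

lemma pform_sub_right (s n : ℕ) (u v w : Fin n → ℝ) :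
    pform s n w (u - v) = pform s n w u - pform s n w v := by
  rw [pform_comm, pform_sub_left, pform_comm s n u, pform_comm s n v]

lemma pform_hasDerivAt {s n : ℕ} {f g : ℝ → Fin n → ℝ} {f' g' : Fin n → ℝ} {x : ℝ}
    (hf : HasDerivAt f f' x) (hg : HasDerivAt g g' x) :
    HasDerivAt (fun t => pform s n (f t) (g t))
      (pform s n f' (g x) + pform s n (f x) g') x := by
  have hfi : ∀ i, HasDerivAt (fun t => f t i) (f' i) x := hasDerivAt_pi.mp hf
  have hgi : ∀ i, HasDerivAt (fun t => g t i) (g' i) x := hasDerivAt_pi.mp hg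
  have H : HasDerivAt
      (fun t => ∑ i : Fin n, (if (i : ℕ) < s then -(f t i * g t i) else f t i * g t i))
      (∑ i : Fin n, (if (i : ℕ) < s then -(f' i * g x i + f x i * g' i)
        else f' i * g x i + f x i * g' i)) x := by
    apply HasDerivAt.fun_sum
    intro i _
    by_cases h : (i : ℕ) < s
    · simp only [if_pos h]; exact ((hfi i).mul (hgi i)).neg
    · simp only [if_neg h]; exact (hfi i).mul (hgi i)
  unfold pform
  convert H using 1
  rw [← Finset.sum_add_distrib]
  apply Finset.sum_congr rfl; intros; split <;> ring

/-- The first partial derivative of `L` in the first variable. -/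
noncomputable def pA (n : ℕ) (z w : ℝ → Fin n → ℝ) (x y : ℝ) : Fin n → ℝ :=
  (1/(x+y)) • deriv z x - (1/(x+y)^2) • (z x + w y) - (1/2:ℝ) • deriv (deriv z) x

lemma lemA (n : ℕ) (z w : ℝ → Fin n → ℝ) {x y : ℝ} (hxy : x + y ≠ 0)
    (h1 : HasDerivAt z (deriv z x) x) (h2 : HasDerivAt (deriv z) (deriv (deriv z) x) x) :
    HasDerivAt (fun t => (1/(t+y)) • (z t + w y) - (1/2:ℝ) • (deriv z t + deriv w y))
      (pA n z w x y) x := by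
  have hu : HasDerivAt (fun t : ℝ => t + y) 1 x := (hasDerivAt_id x).add_const y
  have hinv : HasDerivAt (fun t : ℝ => 1/(t+y)) (-1/(x+y)^2) x := by
    simpa only [one_div] using hu.fun_inv hxy
  have h3 : HasDerivAt (fun t => z t + w y) (deriv z x) x := h1.add_const _
  have h4 := hinv.fun_smul h3
  have h5 : HasDerivAt (fun t => (1/2:ℝ) • (deriv z t + deriv w y))
      ((1/2:ℝ) • deriv (deriv z) x) x := (h2.add_const _).fun_const_smul _
  have h6 := h4.fun_sub h5
  unfold pA
  refine h6.congr_deriv ?_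
  module

lemma lemA2 (n : ℕ) (z w : ℝ → Fin n → ℝ) {x y : ℝ} (hxy : x + y ≠ 0)
    (h1 : HasDerivAt z (deriv z x) x) (h2 : HasDerivAt (deriv z) (deriv (deriv z) x) x)
    (h3 : HasDerivAt (deriv (deriv z)) (deriv (deriv (deriv z)) x) x) :
    HasDerivAt (fun t => pA n z w t y)
      ((-(2/(x+y))) • pA n z w x y + (-(1/2:ℝ)) • deriv (deriv (deriv z)) x) x := by
  have hu : HasDerivAt (fun t : ℝ => t + y) 1 x := (hasDerivAt_id x).add_const y
  have hinv : HasDerivAt (fun t : ℝ => 1/(t+y)) (-1/(x+y)^2) x := by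
    simpa only [one_div] using hu.fun_inv hxy
  have hsq : HasDerivAt (fun t : ℝ => (t+y)^2) (2*(x+y)) x := by
    simpa using hu.fun_pow 2
  have hsqinv : HasDerivAt (fun t : ℝ => 1/(t+y)^2) (-(2*(x+y))/((x+y)^2)^2) x := by
    simpa [one_div] using hsq.fun_inv (pow_ne_zero 2 hxy)
  have hA := hinv.fun_smul h2
  have hB := hsqinv.fun_smul (h1.add_const (w y))
  have hC : HasDerivAt (fun t => (1/2:ℝ) • deriv (deriv z) t)
      ((1/2:ℝ) • deriv (deriv (deriv z)) x) x := h3.fun_const_smul _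
  have h6 := (hA.fun_sub hB).fun_sub hC
  unfold pA
  refine h6.congr_deriv ?_
  funext i
  simp only [Pi.add_apply, Pi.sub_apply, Pi.smul_apply, Pi.neg_apply, smul_eq_mul]
  field_simp
  ring

lemma lemB1 (n : ℕ) (z w : ℝ → Fin n → ℝ) {x y : ℝ} (hxy : y + x ≠ 0)
    (h1 : HasDerivAt z (deriv z x) x) :
    HasDerivAt (fun t => pA n w z y t)
      ((2/(y+x)^2) • ((1/(y+x)) • (w y + z x) - (1/2:ℝ) • (deriv w y + deriv z x))) x := by
  have hu : HasDerivAt (fun t : ℝ => y + t) 1 x := (hasDerivAt_id x).const_add y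
  have hinv : HasDerivAt (fun t : ℝ => 1/(y+t)) (-1/(y+x)^2) x := by
    simpa only [one_div] using hu.fun_inv hxy
  have hsq : HasDerivAt (fun t : ℝ => (y+t)^2) (2*(y+x)) x := by
    simpa using hu.fun_pow 2
  have hsqinv : HasDerivAt (fun t : ℝ => 1/(y+t)^2) (-(2*(y+x))/((y+x)^2)^2) x := by
    simpa [one_div] using hsq.fun_inv (pow_ne_zero 2 hxy)
  have hA : HasDerivAt (fun t : ℝ => (1/(y+t)) • deriv w y) ((-1/(y+x)^2) • deriv w y) x :=
    hinv.smul_const _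
  have hB := hsqinv.fun_smul (h1.const_add (w y))
  have hC : HasDerivAt (fun _ : ℝ => (1/2:ℝ) • deriv (deriv w) y) 0 x := hasDerivAt_const _ _
  have h6 := (hA.fun_sub hB).fun_sub hC
  unfold pA
  refine h6.congr_deriv ?_
  funext i
  simp only [Pi.add_apply, Pi.sub_apply, Pi.smul_apply, Pi.zero_apply, Pi.neg_apply, smul_eq_mul]
  field_simp
  ring

theorem stmt_9 (m s : ℕ) (hm : 2 ≤ m) (hs : s ≤ m + 1) (I J : Set ℝ)
    (hIo : IsOpen I) (hIc : I.OrdConnected) (hJo : IsOpen J) (hJc : J.OrdConnected)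
    (hpos : ∀ x ∈ I, ∀ y ∈ J, 0 < x + y)
    (z w : ℝ → Fin (m + 1) → ℝ) (hz : ContDiffOn ℝ 3 z I) (hw : ContDiffOn ℝ 3 w J)
    (L : ℝ → ℝ → Fin (m + 1) → ℝ)
    (hLdef : ∀ x y : ℝ,
      L x y = (1 / (x + y)) • (z x + w y) - (1 / 2 : ℝ) • (deriv z x + deriv w y))
    (hc1 : ∀ x ∈ I, ∀ y ∈ J, pform s (m + 1) (L x y) (L x y) = 1)
    (hc2 : ∀ x ∈ I, ∀ y ∈ J,
      2 * pform s (m + 1) (z x + w y) (deriv (deriv (deriv z)) x) =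
        (x + y) * pform s (m + 1) (deriv z x + deriv w y) (deriv (deriv (deriv z)) x))
    (hc3 : ∀ x ∈ I, ∀ y ∈ J,
      2 * pform s (m + 1) (z x + w y) (deriv (deriv (deriv w)) y) =
        (x + y) * pform s (m + 1) (deriv z x + deriv w y) (deriv (deriv (deriv w)) y)) :
    ∀ x ∈ I, ∀ y ∈ J,
      pform s (m + 1) (pd1 L x y) (pd1 L x y) = 0 ∧
      pform s (m + 1) (pd2 L x y) (pd2 L x y) = 0 ∧
      pform s (m + 1) (pd1 L x y) (pd2 L x y) = -2 / (x + y) ^ 2 ∧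
      pd1 (pd2 L) x y = (2 / (x + y) ^ 2) • L x y := by
  -- differentiability facts
  have hzC2 : ContDiffOn ℝ 2 (deriv z) I := hz.deriv_of_isOpen hIo (by norm_num)
  have hzC1 : ContDiffOn ℝ 1 (deriv (deriv z)) I := hzC2.deriv_of_isOpen hIo (by norm_num)
  have hwC2 : ContDiffOn ℝ 2 (deriv w) J := hw.deriv_of_isOpen hJo (by norm_num)
  have hwC1 : ContDiffOn ℝ 1 (deriv (deriv w)) J := hwC2.deriv_of_isOpen hJo (by norm_num)
  have hIzd1 : ∀ x ∈ I, HasDerivAt z (deriv z x) x := fun x hx =>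
    ((hz.differentiableOn (by norm_num)).differentiableAt (hIo.mem_nhds hx)).hasDerivAt
  have hIzd2 : ∀ x ∈ I, HasDerivAt (deriv z) (deriv (deriv z) x) x := fun x hx =>
    ((hzC2.differentiableOn (by norm_num)).differentiableAt (hIo.mem_nhds hx)).hasDerivAt
  have hIzd3 : ∀ x ∈ I, HasDerivAt (deriv (deriv z)) (deriv (deriv (deriv z)) x) x := fun x hx =>
    ((hzC1.differentiableOn (by norm_num)).differentiableAt (hIo.mem_nhds hx)).hasDerivAt
  have hJwd1 : ∀ y ∈ J, HasDerivAt w (deriv w y) y := fun y hy =>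
    ((hw.differentiableOn (by norm_num)).differentiableAt (hJo.mem_nhds hy)).hasDerivAt
  have hJwd2 : ∀ y ∈ J, HasDerivAt (deriv w) (deriv (deriv w) y) y := fun y hy =>
    ((hwC2.differentiableOn (by norm_num)).differentiableAt (hJo.mem_nhds hy)).hasDerivAt
  have hJwd3 : ∀ y ∈ J, HasDerivAt (deriv (deriv w)) (deriv (deriv (deriv w)) y) y := fun y hy =>
    ((hwC1.differentiableOn (by norm_num)).differentiableAt (hJo.mem_nhds hy)).hasDerivAt
  have hne : ∀ x ∈ I, ∀ y ∈ J, x + y ≠ 0 := fun x hx y hy => (hpos x hx y hy).ne'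
  -- first partial derivatives
  have hderLx : ∀ x ∈ I, ∀ y : ℝ, x + y ≠ 0 →
      HasDerivAt (fun t => L t y) (pA (m+1) z w x y) x := by
    intro x hx y hxy
    have hfun : (fun t => L t y)
        = fun t => (1/(t+y)) • (z t + w y) - (1/2:ℝ) • (deriv z t + deriv w y) :=
      funext fun t => hLdef t y
    rw [hfun]
    exact lemA _ z w hxy (hIzd1 x hx) (hIzd2 x hx)
  have hpd1eq : ∀ x ∈ I, ∀ y : ℝ, x + y ≠ 0 → pd1 L x y = pA (m+1) z w x y :=
    fun x hx y hxy => (hderLx x hx y hxy).deriv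
  have hderLy : ∀ y ∈ J, ∀ x : ℝ, y + x ≠ 0 →
      HasDerivAt (fun t => L x t) (pA (m+1) w z y x) y := by
    intro y hy x hxy
    have hfun : (fun t => L x t)
        = fun t => (1/(t+x)) • (w t + z x) - (1/2:ℝ) • (deriv w t + deriv z x) := by
      funext t
      rw [hLdef x t, add_comm x t, add_comm (z x) (w t), add_comm (deriv z x) (deriv w t)]
    rw [hfun]
    exact lemA _ w z hxy (hJwd1 y hy) (hJwd2 y hy)
  have hpd2eq : ∀ y ∈ J, ∀ x : ℝ, y + x ≠ 0 → pd2 L x y = pA (m+1) w z y x :=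
    fun y hy x hxy => (hderLy y hy x hxy).deriv
  -- ⟨L_x, L⟩ = 0
  have key1 : ∀ x ∈ I, ∀ y ∈ J, pform s (m+1) (pA (m+1) z w x y) (L x y) = 0 := by
    intro x hx y hy
    have hxy := hne x hx y hy
    have hder := hderLx x hx y hxy
    have hF : HasDerivAt (fun t => pform s (m+1) (L t y) (L t y))
        (pform s (m+1) (pA (m+1) z w x y) (L x y)
          + pform s (m+1) (L x y) (pA (m+1) z w x y)) x := pform_hasDerivAt hder hder
    have hev : (fun t => pform s (m+1) (L t y) (L t y)) =ᶠ[nhds x] fun _ => (1:ℝ) := by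
      filter_upwards [hIo.eventually_mem hx] with t ht
      exact hc1 t ht y hy
    have h0 := hev.deriv_eq
    rw [hF.deriv] at h0
    simp only [deriv_const] at h0
    rw [pform_comm s (m+1) (L x y)] at h0
    linarith
  -- ⟨L_y, L⟩ = 0
  have key2 : ∀ x ∈ I, ∀ y ∈ J, pform s (m+1) (pA (m+1) w z y x) (L x y) = 0 := by
    intro x hx y hy
    have hyx : y + x ≠ 0 := by rw [add_comm]; exact hne x hx y hy
    have hder := hderLy y hy x hyx
    have hF : HasDerivAt (fun t => pform s (m+1) (L x t) (L x t))
        (pform s (m+1) (pA (m+1) w z y x) (L x y)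
          + pform s (m+1) (L x y) (pA (m+1) w z y x)) y := pform_hasDerivAt hder hder
    have hev : (fun t => pform s (m+1) (L x t) (L x t)) =ᶠ[nhds y] fun _ => (1:ℝ) := by
      filter_upwards [hJo.eventually_mem hy] with t ht
      exact hc1 x hx t ht
    have h0 := hev.deriv_eq
    rw [hF.deriv] at h0
    simp only [deriv_const] at h0
    rw [pform_comm s (m+1) (L x y)] at h0
    linarith
  -- ⟨z''', L⟩ = 0 and ⟨w''', L⟩ = 0
  have hz3L : ∀ x ∈ I, ∀ y ∈ J,
      pform s (m+1) (deriv (deriv (deriv z)) x) (L x y) = 0 := by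
    intro x hx y hy
    have hxy := hne x hx y hy
    have hc := hc2 x hx y hy
    rw [hLdef x y, pform_sub_right, pform_smul_right, pform_smul_right,
      pform_comm s (m+1) _ (z x + w y), pform_comm s (m+1) _ (deriv z x + deriv w y)]
    field_simp
    linarith
  have hw3L : ∀ x ∈ I, ∀ y ∈ J,
      pform s (m+1) (deriv (deriv (deriv w)) y) (L x y) = 0 := by
    intro x hx y hy
    have hxy := hne x hx y hy
    have hc := hc3 x hx y hy
    rw [hLdef x y, pform_sub_right, pform_smul_right, pform_smul_right,
      pform_comm s (m+1) _ (z x + w y), pform_comm s (m+1) _ (deriv z x + deriv w y)]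
    field_simp
    linarith
  -- main computation
  intro x hx y hy
  have hxy := hne x hx y hy
  have hyx : y + x ≠ 0 := by rw [add_comm]; exact hxy
  have hop : ∀ᶠ t in nhds x, 0 < t + y :=
    (isOpen_lt continuous_const (continuous_id.add continuous_const)).eventually_mem
      (hpos x hx y hy)
  have hopy : ∀ᶠ t in nhds y, 0 < x + t :=
    (isOpen_lt continuous_const (continuous_const.add continuous_id)).eventually_mem
      (hpos x hx y hy)
  have hderLxy : HasDerivAt (fun t => L t y) (pA (m+1) z w x y) x := hderLx x hx y hxy
  have hderLyx : HasDerivAt (fun t => L x t) (pA (m+1) w z y x) y := hderLy y hy x hyx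
  -- Part 4 : L_xy = (2/(x+y)^2) L
  have hev4 : (fun t => pd2 L t y) =ᶠ[nhds x] fun t => pA (m+1) w z y t := by
    filter_upwards [hop] with t ht
    exact hpd2eq y hy t (by linarith)
  have hder4 := lemB1 (m+1) z w hyx (hIzd1 x hx)
  have hcoef : (2/(y+x)^2) • ((1/(y+x)) • (w y + z x) - (1/2:ℝ) • (deriv w y + deriv z x))
      = (2/(x+y)^2) • L x y := by
    rw [hLdef x y, add_comm y x, add_comm (w y) (z x), add_comm (deriv w y) (deriv z x)]
  have hder4' : HasDerivAt (fun t => pd2 L t y) ((2/(x+y)^2) • L x y) x :=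
    (hcoef ▸ hder4).congr_of_eventuallyEq hev4
  have part4 : pd1 (pd2 L) x y = (2/(x+y)^2) • L x y := hder4'.deriv
  -- Part 3 : ⟨L_x, L_y⟩ = -2/(x+y)^2
  have hG : HasDerivAt (fun t => pform s (m+1) (pd2 L t y) (L t y))
      (pform s (m+1) ((2/(x+y)^2) • L x y) (L x y)
        + pform s (m+1) (pd2 L x y) (pA (m+1) z w x y)) x :=
    pform_hasDerivAt hder4' hderLxy
  have hGev : (fun t => pform s (m+1) (pd2 L t y) (L t y)) =ᶠ[nhds x] fun _ => (0:ℝ) := by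
    filter_upwards [hop, hIo.eventually_mem hx] with t ht1 ht2
    rw [hpd2eq y hy t (by linarith), key2 t ht2 y hy]
  have h03 := hGev.deriv_eq
  rw [hG.deriv] at h03
  simp only [deriv_const] at h03
  rw [pform_smul_left, hc1 x hx y hy, mul_one, hpd2eq y hy x hyx] at h03
  have part3 : pform s (m+1) (pd1 L x y) (pd2 L x y) = -2 / (x + y) ^ 2 := by
    rw [hpd1eq x hx y hxy, hpd2eq y hy x hyx,
      pform_comm s (m+1) (pA (m+1) z w x y) (pA (m+1) w z y x)]
    have : (-2) / (x+y)^2 = -(2/(x+y)^2) := by ring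
    rw [this]
    linarith
  -- Part 1 : ⟨L_x, L_x⟩ = 0
  have hevp1 : (fun t => pd1 L t y) =ᶠ[nhds x] fun t => pA (m+1) z w t y := by
    filter_upwards [hop, hIo.eventually_mem hx] with t ht1 ht2
    exact hpd1eq t ht2 y (by linarith)
  have hpd1der : HasDerivAt (fun t => pd1 L t y)
      ((-(2/(x+y))) • pA (m+1) z w x y + (-(1/2:ℝ)) • deriv (deriv (deriv z)) x) x :=
    (lemA2 (m+1) z w hxy (hIzd1 x hx) (hIzd2 x hx) (hIzd3 x hx)).congr_of_eventuallyEq hevp1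
  have hG2 : HasDerivAt (fun t => pform s (m+1) (pd1 L t y) (L t y))
      (pform s (m+1)
          ((-(2/(x+y))) • pA (m+1) z w x y + (-(1/2:ℝ)) • deriv (deriv (deriv z)) x) (L x y)
        + pform s (m+1) (pd1 L x y) (pA (m+1) z w x y)) x :=
    pform_hasDerivAt hpd1der hderLxy
  have hG2ev : (fun t => pform s (m+1) (pd1 L t y) (L t y)) =ᶠ[nhds x] fun _ => (0:ℝ) := by
    filter_upwards [hop, hIo.eventually_mem hx] with t ht1 ht2
    rw [hpd1eq t ht2 y (by linarith), key1 t ht2 y hy]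
  have h01 := hG2ev.deriv_eq
  rw [hG2.deriv] at h01
  simp only [deriv_const] at h01
  rw [pform_add_left, pform_smul_left, pform_smul_left, key1 x hx y hy, hz3L x hx y hy,
    hpd1eq x hx y hxy] at h01
  have part1 : pform s (m+1) (pd1 L x y) (pd1 L x y) = 0 := by
    rw [hpd1eq x hx y hxy]; linarith
  -- Part 2 : ⟨L_y, L_y⟩ = 0
  have hevp2 : (fun t => pd2 L x t) =ᶠ[nhds y] fun t => pA (m+1) w z t x := by
    filter_upwards [hopy, hJo.eventually_mem hy] with t ht1 ht2
    exact hpd2eq t ht2 x (by linarith)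
  have hpd2der : HasDerivAt (fun t => pd2 L x t)
      ((-(2/(y+x))) • pA (m+1) w z y x + (-(1/2:ℝ)) • deriv (deriv (deriv w)) y) y :=
    (lemA2 (m+1) w z hyx (hJwd1 y hy) (hJwd2 y hy) (hJwd3 y hy)).congr_of_eventuallyEq hevp2
  have hG3 : HasDerivAt (fun t => pform s (m+1) (pd2 L x t) (L x t))
      (pform s (m+1)
          ((-(2/(y+x))) • pA (m+1) w z y x + (-(1/2:ℝ)) • deriv (deriv (deriv w)) y) (L x y)
        + pform s (m+1) (pd2 L x y) (pA (m+1) w z y x)) y :=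
    pform_hasDerivAt hpd2der hderLyx
  have hG3ev : (fun t => pform s (m+1) (pd2 L x t) (L x t)) =ᶠ[nhds y] fun _ => (0:ℝ) := by
    filter_upwards [hopy, hJo.eventually_mem hy] with t ht1 ht2
    rw [hpd2eq t ht2 x (by linarith), key2 x hx t ht2]
  have h02 := hG3ev.deriv_eq
  rw [hG3.deriv] at h02
  simp only [deriv_const] at h02
  rw [pform_add_left, pform_smul_left, pform_smul_left, key2 x hx y hy, hw3L x hx y hy,
    hpd2eq y hy x hyx] at h02
  have part2 : pform s (m+1) (pd2 L x y) (pd2 L x y) = 0 := by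
    rw [hpd2eq y hy x hyx]; linarith
  exact ⟨part1, part2, part3, part4⟩
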